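/- Let d > 1 be real, q > 0, T > 0, and set f(t,d) := √(1 + (1 + t²)/(d − 1)). Suppose T²/(T² + q² f(T,d)²) < R < 1. Then the union over all t with |t| ≤ T and all ρ with ρ² ≤ R of the intervals [−tρ − q f(t,d)√(1 − ρ²), −tρ + q f(t,d)√(1 − ρ²)] equals exactly [−√(T² + q² f(T,d)²), √(T² + q² f(T,d)²)]. -/

import Mathlib

set_option maxHeartbeats 1600000 in
/-- sharpness: for real `d > 1`, `q > 0`, `T > 0`,
`f(t,d) := √(1 + (1 + t²)/(d − 1))` and `T²/(T² + q² f(T,d)²) < R < 1`, the union over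
`|t| ≤ T` and `ρ² ≤ R` of the intervals
`[−tρ − q f(t,d)√(1 − ρ²), −tρ + q f(t,d)√(1 − ρ²)]` equals exactly
`[−√(T² + q² f(T,d)²), √(T² + q² f(T,d)²)]`. -/
theorem stmt8 (d q T R : ℝ) (hd : 1 < d) (hq : 0 < q) (hT : 0 < T)
    (hR1 : T ^ 2 /
        (T ^ 2 + q ^ 2 * Real.sqrt (1 + (1 + T ^ 2) / (d - 1)) ^ 2) < R)
    (hR2 : R < 1) :
    (⋃ (t : ℝ) (ρ : ℝ) (_ : |t| ≤ T) (_ : ρ ^ 2 ≤ R),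
        Set.Icc
          (-t * ρ - q * Real.sqrt (1 + (1 + t ^ 2) / (d - 1)) * Real.sqrt (1 - ρ ^ 2))
          (-t * ρ + q * Real.sqrt (1 + (1 + t ^ 2) / (d - 1)) * Real.sqrt (1 - ρ ^ 2)))
      = Set.Icc
          (-Real.sqrt (T ^ 2 + q ^ 2 * Real.sqrt (1 + (1 + T ^ 2) / (d - 1)) ^ 2))
          (Real.sqrt (T ^ 2 + q ^ 2 * Real.sqrt (1 + (1 + T ^ 2) / (d - 1)) ^ 2)) := by
  have hd' : (0:ℝ) < d - 1 := by linarith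
  set fT := Real.sqrt (1 + (1 + T ^ 2) / (d - 1)) with hfT
  have hfT0 : 0 < fT := Real.sqrt_pos.2 (by positivity)
  have hfTsq : fT ^ 2 = 1 + (1 + T ^ 2) / (d - 1) := Real.sq_sqrt (by positivity)
  set M := Real.sqrt (T ^ 2 + q ^ 2 * fT ^ 2) with hM
  have hM0 : 0 < M := Real.sqrt_pos.2 (by positivity)
  have hMsq : M ^ 2 = T ^ 2 + q ^ 2 * fT ^ 2 := Real.sq_sqrt (by positivity)
  have hM2 : (0:ℝ) < M ^ 2 := by positivity
  have hTM : T ^ 2 < R * M ^ 2 := by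
    rw [hMsq]
    have h := (div_lt_iff₀ (by positivity : (0:ℝ) < T ^ 2 + q ^ 2 * fT ^ 2)).1 hR1
    linarith
  ext x
  simp only [Set.mem_iUnion, Set.mem_Icc, exists_prop]
  constructor
  · rintro ⟨t, ρ, ht, hρ, h1, h2⟩
    set ft := Real.sqrt (1 + (1 + t ^ 2) / (d - 1)) with hft
    have hft0 : 0 ≤ ft := Real.sqrt_nonneg _
    have hftsq : ft ^ 2 = 1 + (1 + t ^ 2) / (d - 1) := Real.sq_sqrt (by positivity)
    have hρ1 : ρ ^ 2 ≤ 1 := le_of_lt (lt_of_le_of_lt hρ hR2)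
    set s := Real.sqrt (1 - ρ ^ 2) with hs
    have hs0 : 0 ≤ s := Real.sqrt_nonneg _
    have hssq : s ^ 2 = 1 - ρ ^ 2 := Real.sq_sqrt (by linarith)
    have htsq : t ^ 2 ≤ T ^ 2 := by
      have h := abs_le.1 ht
      nlinarith [h.1, h.2]
    have hftle : ft ^ 2 ≤ fT ^ 2 := by
      rw [hftsq, hfTsq]
      have h : (1 + t ^ 2) / (d - 1) ≤ (1 + T ^ 2) / (d - 1) := by
        gcongr
      linarith
    have hq2ft : q ^ 2 * ft ^ 2 ≤ q ^ 2 * fT ^ 2 :=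
      mul_le_mul_of_nonneg_left hftle (sq_nonneg q)
    have hbs : |ρ| ^ 2 + s ^ 2 = 1 := by rw [sq_abs]; linarith
    have hCS : (|t| * |ρ| + q * ft * s) ^ 2 ≤ (t ^ 2 + q ^ 2 * ft ^ 2) * (|ρ| ^ 2 + s ^ 2) := by
      nlinarith [sq_nonneg (|t| * s - q * ft * |ρ|), sq_abs t]
    have hkey : (|t| * |ρ| + q * ft * s) ^ 2 ≤ M ^ 2 := by
      rw [hbs, mul_one] at hCS
      linarith [hMsq, hq2ft, htsq]
    have hle : |t| * |ρ| + q * ft * s ≤ M := by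
      have hnn : 0 ≤ |t| * |ρ| + q * ft * s :=
        add_nonneg (mul_nonneg (abs_nonneg t) (abs_nonneg ρ))
          (mul_nonneg (mul_nonneg hq.le hft0) hs0)
      have h := Real.sqrt_le_sqrt hkey
      rwa [Real.sqrt_sq hnn, Real.sqrt_sq hM0.le] at h
    have h3 : t * ρ ≤ |t| * |ρ| := by rw [← abs_mul]; exact le_abs_self _
    have h4 : -(|t| * |ρ|) ≤ t * ρ := by rw [← abs_mul]; exact neg_abs_le _
    constructor
    · linarith [h3, hle, h1]
    · linarith [h4, hle, h2]
  · rintro ⟨h1, h2⟩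
    have hx2 : x ^ 2 ≤ M ^ 2 := by
      nlinarith [mul_nonneg (by linarith : (0:ℝ) ≤ M - x) (by linarith : (0:ℝ) ≤ M + x)]
    have hρR : (-(x * T) / M ^ 2) ^ 2 ≤ R := by
      rw [div_pow, div_le_iff₀ (by positivity)]
      nlinarith [mul_le_mul_of_nonneg_right hx2 (sq_nonneg T),
        mul_lt_mul_of_pos_right hTM hM2]
    refine ⟨T, -(x * T) / M ^ 2, le_of_eq (abs_of_pos hT), hρR, ?_, ?_⟩
    all_goals {
      have hρ1 : (-(x * T) / M ^ 2) ^ 2 ≤ 1 := le_of_lt (lt_of_le_of_lt hρR hR2)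
      set s2 := Real.sqrt (1 - (-(x * T) / M ^ 2) ^ 2) with hs2
      have hs20 : 0 ≤ s2 := Real.sqrt_nonneg _
      have hs2sq : s2 ^ 2 = 1 - (-(x * T) / M ^ 2) ^ 2 := Real.sq_sqrt (by linarith)
      have hs2M : s2 ^ 2 * M ^ 4 = M ^ 4 - x ^ 2 * T ^ 2 := by
        rw [hs2sq]; field_simp; try ring
      have hxM : x ^ 2 * M ^ 2 ≤ M ^ 2 * M ^ 2 := mul_le_mul_of_nonneg_right hx2 (sq_nonneg M)
      have hxsplit : x ^ 2 * M ^ 2 = x ^ 2 * T ^ 2 + q ^ 2 * fT ^ 2 * x ^ 2 := by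
        rw [hMsq]; ring
      have hsq : (x * q * fT) ^ 2 ≤ (s2 * M ^ 2) ^ 2 := by nlinarith [hs2M, hxM, hxsplit]
      have habs : |x * q * fT| ≤ s2 * M ^ 2 := by
        have h := Real.sqrt_le_sqrt hsq
        rwa [Real.sqrt_sq_eq_abs, Real.sqrt_sq (mul_nonneg hs20 hM2.le)] at h
      have hstep : x * q * fT ≤ s2 * M ^ 2 := (le_abs_self _).trans habs
      have hstep2 : -(x * q * fT) ≤ s2 * M ^ 2 := (neg_le_abs _).trans habs
      have hup : x * (q ^ 2 * fT ^ 2) ≤ q * fT * s2 * M ^ 2 := by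
        nlinarith [mul_le_mul_of_nonneg_right hstep (le_of_lt (mul_pos hq hfT0))]
      have hlo : -(x * (q ^ 2 * fT ^ 2)) ≤ q * fT * s2 * M ^ 2 := by
        nlinarith [mul_le_mul_of_nonneg_right hstep2 (le_of_lt (mul_pos hq hfT0))]
      have e1 : -T * (-(x * T) / M ^ 2) = x * T ^ 2 / M ^ 2 := by ring
      have hxe : x * M ^ 2 = x * T ^ 2 + x * (q ^ 2 * fT ^ 2) := by rw [hMsq]; ring
      rw [e1]
      first
      | (rw [show x * T ^ 2 / M ^ 2 - q * fT * s2 = (x * T ^ 2 - q * fT * s2 * M ^ 2) / M ^ 2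
            from by field_simp; try ring, div_le_iff₀ hM2]
         linarith [hlo, hxe])
      | (rw [show x * T ^ 2 / M ^ 2 + q * fT * s2 = (x * T ^ 2 + q * fT * s2 * M ^ 2) / M ^ 2
            from by field_simp; try ring, le_div_iff₀ hM2]
         linarith [hup, hxe])
    }
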